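/- Let q > 1, θ ∈ (0,1) and γ ∈ (0,1) satisfy q(θ-1) > -1 and γ < 1/q. Then there exists a constant C = C(T,q,θ) such that for all t ∈ [0,T] and all h ∈ (0,1): ∫_0^t ∫_ℝ (r+h)^{q(θ-1)} · |𝟙_{|z| < r+h} - 𝟙_{|z| < r}|^q dz dr ≤ C·h^{γq}. -/

import Mathlib

open MeasureTheory Real

theorem stmt13 (T q θ γ : ℝ) (hT : 0 < T) (hq : 1 < q) (hθ : θ ∈ Set.Ioo (0 : ℝ) 1)
    (hγ : γ ∈ Set.Ioo (0 : ℝ) 1) (hqθ : -1 < q * (θ - 1)) (hγq : γ < 1 / q) :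
    ∃ C : ℝ, 0 < C ∧ ∀ t h : ℝ, t ∈ Set.Icc 0 T → h ∈ Set.Ioo (0 : ℝ) 1 →
      (∫ r in (0 : ℝ)..t, ∫ z : ℝ,
          (r + h) ^ (q * (θ - 1)) *
            |(if |z| < r + h then (1 : ℝ) else 0) - (if |z| < r then (1 : ℝ) else 0)| ^ q)
        ≤ C * h ^ (γ * q) := by
  set a := q * (θ - 1) with ha
  have ha1 : 0 < a + 1 := by linarith
  refine ⟨2 * (T + 1) ^ (a + 1) / (a + 1), by positivity, ?_⟩
  rintro t h ⟨ht0, htT⟩ ⟨hh0, hh1⟩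
  have key : ∀ r ∈ Set.uIcc (0:ℝ) t,
      (∫ z : ℝ, (r + h) ^ a *
        |(if |z| < r + h then (1 : ℝ) else 0) - (if |z| < r then (1 : ℝ) else 0)| ^ q)
      = (r + h) ^ a * (2 * h) := by
    intro r hr
    rw [Set.uIcc_of_le ht0] at hr
    have hr0 : 0 ≤ r := hr.1
    set S : Set ℝ := Set.Ioo (-(r+h)) (r+h) \ Set.Ioo (-r) r with hS
    have heq : ∀ z : ℝ, (r + h) ^ a *
        |(if |z| < r + h then (1 : ℝ) else 0) - (if |z| < r then (1 : ℝ) else 0)| ^ q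
        = S.indicator (fun _ => (r + h) ^ a) z := by
      intro z
      by_cases h1 : |z| < r
      · have h2 : |z| < r + h := by linarith
        have hz : z ∉ S := fun hz => hz.2 (Set.mem_Ioo.mpr (abs_lt.mp h1))
        simp [Set.indicator_of_notMem hz, h1, h2, Real.zero_rpow (by linarith : q ≠ 0)]
      · by_cases h2 : |z| < r + h
        · have hz : z ∈ S := ⟨Set.mem_Ioo.mpr (abs_lt.mp h2),
            fun hc => h1 (abs_lt.mpr ⟨hc.1, hc.2⟩)⟩
          simp [Set.indicator_of_mem hz, h1, h2, Real.one_rpow]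
        · have hz : z ∉ S := fun hz => h2 (abs_lt.mpr ⟨hz.1.1, hz.1.2⟩)
          simp [Set.indicator_of_notMem hz, h1, h2, Real.zero_rpow (by linarith : q ≠ 0)]
    simp_rw [heq]
    rw [integral_indicator_const _ (measurableSet_Ioo.diff measurableSet_Ioo)]
    have hvol : volume S = ENNReal.ofReal (2 * h) := by
      rw [hS, measure_diff (Set.Ioo_subset_Ioo (by linarith) (by linarith))
        measurableSet_Ioo.nullMeasurableSet (measure_Ioo_lt_top.ne),
        Real.volume_Ioo, Real.volume_Ioo, ← ENNReal.ofReal_sub _ (by linarith)]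
      congr 1; ring
    rw [measureReal_def, show volume (Set.Ioo (-(r + h)) (r + h) \ Set.Ioo (-r) r) = ENNReal.ofReal (2*h) from hvol, ENNReal.toReal_ofReal (by positivity)]
    simp [mul_comm]
  rw [intervalIntegral.integral_congr key, intervalIntegral.integral_mul_const]
  have hint : (∫ r in (0:ℝ)..t, (r + h) ^ a) = ((t+h)^(a+1) - (0+h)^(a+1)) / (a+1) := by
    rw [intervalIntegral.integral_comp_add_right (fun x => x ^ a) h,
      integral_rpow (Or.inl hqθ)]
  rw [hint]
  have hhle : h ≤ h ^ (γ * q) := by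
    nth_rewrite 1 [← Real.rpow_one h]
    apply Real.rpow_le_rpow_of_exponent_ge hh0 hh1.le
    have hq0 : 0 < q := by linarith
    calc γ * q ≤ (1/q) * q := by nlinarith
    _ = 1 := by field_simp
  have hnum : (t+h)^(a+1) - (0+h)^(a+1) ≤ (T+1)^(a+1) := by
    have h1 : (t+h)^(a+1) ≤ (T+1)^(a+1) :=
      Real.rpow_le_rpow (by linarith) (by linarith) ha1.le
    have h2 : (0:ℝ) ≤ (0+h)^(a+1) := Real.rpow_nonneg (by linarith) _
    linarith
  calc ((t+h)^(a+1) - (0+h)^(a+1)) / (a+1) * (2*h)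
      ≤ (T+1)^(a+1)/(a+1) * (2*h) := by
        exact mul_le_mul_of_nonneg_right ((div_le_div_iff_of_pos_right ha1).mpr hnum) (by positivity)
    _ = 2*(T+1)^(a+1)/(a+1) * h := by ring
    _ ≤ 2*(T+1)^(a+1)/(a+1) * h^(γ*q) :=
        mul_le_mul_of_nonneg_left hhle (by positivity)
    _ = 2 * (T + 1) ^ (a + 1) / (a + 1) * h ^ (γ * q) := by ring
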